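/- If A is a naturally graded quasi-filiform complex Zinbiel algebra of type A_(r) (that is, with grading A = A_1 ⊕ ⋯ ⊕ A_{n−2} where either r = 1 and dim A_1 = 3, or r ≥ 2 and dim A_1 = 2 = dim A_r), then r ≤ 3. -/

import Mathlib

/-- A complex Zinbiel algebra structure on the module `A`: a bilinear
multiplication satisfying `(x∘y)∘z = x∘(y∘z) + x∘(z∘y)`. -/
structure ZinbielStr (A : Type*) [AddCommGroup A] [Module ℂ A] where
  mul : A →ₗ[ℂ] A →ₗ[ℂ] A
  zinbiel : ∀ x y z : A, mul (mul x y) z = mul x (mul y z) + mul x (mul z y)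

namespace ZinbielStr

variable {A : Type*} [AddCommGroup A] [Module ℂ A]

/-- `M.lcs k` is the term `A^k` of the lower central series for `k ≥ 1`
(`A^1 = A`, `A^{k+1} = span (A ∘ A^k)`), with the convention `M.lcs 0 = ⊤`. -/
def lcs (M : ZinbielStr A) : ℕ → Submodule ℂ A
  | 0 => ⊤
  | 1 => ⊤
  | k + 2 => Submodule.span ℂ {z | ∃ a b, b ∈ lcs M (k + 1) ∧ z = M.mul a b}

/-- A Zinbiel algebra is nilpotent when some term of the lower central series vanishes. -/
def IsNilpotent (M : ZinbielStr A) : Prop := ∃ s, 1 ≤ s ∧ M.lcs s = ⊥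

/-- `Ag` is a natural grading of `M` with parts `Ag 1, …, Ag t`:
the parts are independent, `A_i ∘ A_j ⊆ A_{i+j}` (with `A_k = 0` for `k > t` and `k = 0`),
and `A^k = A_k ⊕ A_{k+1} ⊕ ⋯ ⊕ A_t` for all `1 ≤ k ≤ t`. -/
structure IsNaturalGrading (M : ZinbielStr A) (t : ℕ) (Ag : ℕ → Submodule ℂ A) : Prop where
  zero_deg : Ag 0 = ⊥
  high_deg : ∀ k, t < k → Ag k = ⊥
  indep : iSupIndep Ag
  mul_mem : ∀ i j x y, x ∈ Ag i → y ∈ Ag j → M.mul x y ∈ Ag (i + j)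
  lcs_eq : ∀ k, 1 ≤ k → k ≤ t → M.lcs k = ⨆ j, ⨆ (_ : k ≤ j), Ag j

/-- An `n`-dimensional Zinbiel algebra is quasi-filiform if `A^{n-2} ≠ 0` and `A^{n-1} = 0`. -/
def IsQuasiFiliform (M : ZinbielStr A) (n : ℕ) : Prop :=
  Module.finrank ℂ A = n ∧ M.lcs (n - 2) ≠ ⊥ ∧ M.lcs (n - 1) = ⊥

/-! ### Auxiliary scalar lemmas -/

lemma aux_base {X : Type*} (φ ψ : X → ℂ) (μ : X → X → ℂ)
    (h : ∀ x y z, μ x y * ψ z = (μ y z + μ z y) * φ x)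
    (hμ : ∃ x y, μ x y ≠ 0) (hφ : ∃ x, φ x ≠ 0) :
    (∀ z, ψ z = 0) ∨ (∀ z, ψ z = 2 * φ z) := by
  by_cases hz : ∀ z, ψ z = 0
  · exact Or.inl hz
  push_neg at hz
  obtain ⟨z1, hz1⟩ := hz
  obtain ⟨x0, hx0⟩ := hφ
  set lam : X → ℂ := fun y => (μ y z1 + μ z1 y) / ψ z1 with hlam
  have hmu : ∀ x y, μ x y = φ x * lam y := by
    intro x y
    have h1 := h x y z1
    simp only [hlam]
    field_simp
    linear_combination h1
  have hdag : ∀ y z, lam y * ψ z = φ y * lam z + φ z * lam y := by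
    intro y z
    have h1 := h x0 y z
    rw [hmu x0 y, hmu y z, hmu z y] at h1
    apply mul_left_cancel₀ hx0
    linear_combination h1
  have hlamne : ∃ y, lam y ≠ 0 := by
    obtain ⟨x, y, hxy⟩ := hμ
    refine ⟨y, fun h0 => hxy ?_⟩
    rw [hmu x y, h0, mul_zero]
  obtain ⟨y1, hy1⟩ := hlamne
  have hkey : ∀ z, lam z = 0 → φ z = 0 := by
    intro z0 hl0
    by_contra hphi
    have : ∀ z, lam z = 0 := by
      intro z
      have h1 := hdag z0 z
      rw [hl0] at h1
      simp at h1
      rcases h1 with h1 | h1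
      · exact (hphi h1).elim
      · exact h1
    exact hy1 (this y1)
  right
  intro z
  by_cases hlz : lam z = 0
  · have hphz := hkey z hlz
    have h1 := hdag y1 z
    rw [hlz, hphz] at h1
    simp at h1
    rcases h1 with h1 | h1
    · exact (hy1 h1).elim
    · rw [h1, hphz]; ring
  · have h1 := hdag z z
    apply mul_right_cancel₀ hlz
    linear_combination h1

lemma aux_chase {X : Type*} (φ ψ : ℕ → X → ℂ) (N : ℕ) (hN : 2 ≤ N)
    (hbase : ∃ c : ℕ, ∀ x, ψ 2 x = (c : ℂ) * φ 2 x)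
    (hstep : ∀ k, 2 ≤ k → k + 1 ≤ N →
      ∀ x y, φ k y * ψ (k+1) x = (φ k x + ψ k x) * φ (k+1) y)
    (hnz : ∀ k, 2 ≤ k → k ≤ N → ∃ x, φ k x ≠ 0) :
    ∃ c : ℕ, ∀ x, ψ N x = (c : ℂ) * φ N x := by
  suffices h : ∀ k, 2 ≤ k → k ≤ N → ∃ c : ℕ, ∀ x, ψ k x = (c : ℂ) * φ k x from
    h N hN le_rfl
  intro k hk
  induction k, hk using Nat.le_induction with
  | base => intro _; exact hbase
  | succ k hk ih =>
    intro hkN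
    obtain ⟨c, hc⟩ := ih (by omega)
    have hkN' : k ≤ N := by omega
    obtain ⟨x1, hx1⟩ := hnz k hk hkN'
    obtain ⟨x2, hx2⟩ := hnz (k+1) (by omega) hkN
    have hcne : (1 : ℂ) + (c : ℂ) ≠ 0 := by
      have : ((1 + c : ℕ) : ℂ) ≠ 0 := Nat.cast_ne_zero.2 (by omega)
      push_cast at this; exact this
    set β : ℂ := ψ (k+1) x1 / ((1 + (c:ℂ)) * φ k x1) with hβ
    have hφs : ∀ y, φ (k+1) y = β * φ k y := by
      intro y
      have h1 := hstep k hk hkN x1 y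
      rw [hc x1] at h1
      rw [hβ, div_mul_eq_mul_div, eq_div_iff (mul_ne_zero hcne hx1)]
      linear_combination -h1
    have hβne : β ≠ 0 := by
      intro h0
      apply hx2
      rw [hφs x2, h0, zero_mul]
    refine ⟨c + 1, fun x => ?_⟩
    have h1 := hstep k hk hkN x x1
    rw [hc x, hφs x1] at h1
    rw [hφs x]
    apply mul_left_cancel₀ hx1
    push_cast
    linear_combination h1

/-! ### lcs lemmas -/

lemma lcs_succ (M : ZinbielStr A) (k : ℕ) (hk : 1 ≤ k) :
    M.lcs (k + 1) = Submodule.span ℂ {z | ∃ a b, b ∈ M.lcs k ∧ z = M.mul a b} := by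
  obtain ⟨m, rfl⟩ := Nat.exists_eq_add_of_le hk
  rw [show 1+m+1 = m+2 by ring, show 1+m = m+1 by ring]
  rfl

lemma lcs_stab (M : ZinbielStr A) (j : ℕ) (hj : 1 ≤ j)
    (h : M.lcs j = M.lcs (j + 1)) : ∀ m, j ≤ m → M.lcs m = M.lcs j := by
  intro m hm
  obtain ⟨i, rfl⟩ := Nat.exists_eq_add_of_le hm
  induction i with
  | zero => rfl
  | succ i ih =>
    have h1 : j + (i + 1) = (j + i) + 1 := by ring
    rw [h1, lcs_succ M (j+i) (by omega), ih (by omega), ← lcs_succ M j hj, ← h]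

namespace IsNaturalGrading

variable {M : ZinbielStr A} {t : ℕ} {Ag : ℕ → Submodule ℂ A}

lemma graded_span (hg : M.IsNaturalGrading t Ag) (ht : 1 ≤ t) {m : ℕ}
    (hm : 2 ≤ m) (hmt : m ≤ t) :
    Ag m ≤ Submodule.span ℂ
      {z | ∃ x y, x ∈ Ag 1 ∧ y ∈ Ag (m - 1) ∧ z = M.mul x y} := by
  set Q : Submodule ℂ A :=
    Submodule.span ℂ {z | ∃ x y, x ∈ Ag 1 ∧ y ∈ Ag (m - 1) ∧ z = M.mul x y} with hQdef
  set R : Submodule ℂ A := ⨆ j, ⨆ (_ : m + 1 ≤ j), Ag j with hRdef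
  have hQ : Q ≤ Ag m := by
    rw [hQdef, Submodule.span_le]
    rintro z ⟨x, y, hx, hy, rfl⟩
    have := hg.mul_mem 1 (m - 1) x y hx hy
    rwa [show 1 + (m - 1) = m by omega] at this
  have htop : ∀ a : A, a ∈ (⨆ j, ⨆ (_ : 1 ≤ j), Ag j) := by
    intro a
    have h1 : M.lcs 1 = ⨆ j, ⨆ (_ : 1 ≤ j), Ag j := hg.lcs_eq 1 le_rfl ht
    rw [← h1]; trivial
  have key : ∀ a b : A, b ∈ (⨆ j, ⨆ (_ : m - 1 ≤ j), Ag j) → M.mul a b ∈ Q ⊔ R := by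
    intro a b hb
    refine Submodule.iSup_induction (motive := fun a => M.mul a b ∈ Q ⊔ R) _ (htop a) ?_ ?_ ?_
    · intro i x hx
      by_cases hi : 1 ≤ i
      · rw [iSup_pos hi] at hx
        refine Submodule.iSup_induction (motive := fun b => M.mul x b ∈ Q ⊔ R) _ hb ?_ ?_ ?_
        · intro j y hy
          by_cases hj : m - 1 ≤ j
          · rw [iSup_pos hj] at hy
            have hmem := hg.mul_mem i j x y hx hy
            by_cases hij : i + j = m
            · have hi1 : i = 1 := by omega
              have hj1 : j = m - 1 := by omega
              subst hi1; subst hj1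
              exact Submodule.mem_sup_left (Submodule.subset_span ⟨x, y, hx, hy, rfl⟩)
            · have : m + 1 ≤ i + j := by omega
              exact Submodule.mem_sup_right
                (Submodule.mem_iSup_of_mem (i + j) (by rw [iSup_pos this]; exact hmem))
          · rw [iSup_neg hj] at hy
            have : y = 0 := hy
            simp [this]
        · simp
        · intro u v hu hv
          rw [map_add]
          exact Submodule.add_mem _ hu hv
      · rw [iSup_neg hi] at hx
        have : x = 0 := hx
        simp [this]
    · simp
    · intro u v hu hv
      have : M.mul (u + v) b = M.mul u b + M.mul v b := by
        rw [map_add]; rfl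
      rw [this]
      exact Submodule.add_mem _ hu hv
  have hlm : M.lcs m = Submodule.span ℂ {z | ∃ a b, b ∈ M.lcs (m - 1) ∧ z = M.mul a b} := by
    have h := lcs_succ M (m - 1) (by omega)
    rwa [show m - 1 + 1 = m by omega] at h
  have step1 : M.lcs m ≤ Q ⊔ R := by
    rw [hlm, Submodule.span_le]
    rintro z ⟨a, b, hb, rfl⟩
    rw [hg.lcs_eq (m - 1) (by omega) (by omega)] at hb
    exact key a b hb
  intro x hx
  have hxl : x ∈ M.lcs m := by
    rw [hg.lcs_eq m (by omega) hmt]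
    exact Submodule.mem_iSup_of_mem m (by rw [iSup_pos le_rfl]; exact hx)
  obtain ⟨q, hq, s, hs, hqs⟩ := Submodule.mem_sup.1 (step1 hxl)
  have hxq : x - q ∈ Ag m := Submodule.sub_mem _ hx (hQ hq)
  have hR : R ≤ ⨆ j, ⨆ (_ : j ≠ m), Ag j := by
    refine iSup₂_le fun j hj => ?_
    exact le_iSup₂_of_le j (by omega) le_rfl
  have hdisj := (hg.indep m).eq_bot
  have hxqR : x - q ∈ R := by
    have : x - q = s := by rw [← hqs]; abel
    rw [this]; exact hs
  have : x - q ∈ Ag m ⊓ ⨆ j, ⨆ (_ : j ≠ m), Ag j := ⟨hxq, hR hxqR⟩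
  rw [hdisj] at this
  have hx0 : x - q = 0 := this
  have hxeq : x = q := by rwa [sub_eq_zero] at hx0
  rw [hxeq]; exact hq

lemma lcs_top_eq (hg : M.IsNaturalGrading t Ag) (ht : 1 ≤ t) : M.lcs t = Ag t := by
  rw [hg.lcs_eq t ht le_rfl]
  refine le_antisymm (iSup₂_le fun k hk => ?_) (le_iSup₂_of_le t le_rfl le_rfl)
  rcases eq_or_lt_of_le hk with h | h
  · rw [← h]
  · rw [hg.high_deg k h]; exact bot_le

lemma lcs_sup (hg : M.IsNaturalGrading t Ag) {j : ℕ} (hj : 1 ≤ j) (hjt : j < t) :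
    M.lcs j = Ag j ⊔ M.lcs (j + 1) := by
  rw [hg.lcs_eq j hj (by omega), hg.lcs_eq (j+1) (by omega) (by omega)]
  refine le_antisymm (iSup₂_le fun k hk => ?_) ?_
  · rcases eq_or_lt_of_le hk with h | h
    · rw [← h]; exact le_sup_left
    · exact le_sup_of_le_right (le_iSup₂_of_le k (by omega) le_rfl)
  · refine sup_le (le_iSup₂_of_le j le_rfl le_rfl) (iSup₂_le fun k hk => ?_)
    exact le_iSup₂_of_le k (by omega) le_rfl

lemma lcs_disj (hg : M.IsNaturalGrading t Ag) {j : ℕ} (hj : 1 ≤ j) (hjt : j < t) :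
    Ag j ⊓ M.lcs (j + 1) = ⊥ := by
  have h1 : M.lcs (j+1) ≤ ⨆ k, ⨆ (_ : k ≠ j), Ag k := by
    rw [hg.lcs_eq (j+1) (by omega) (by omega)]
    exact iSup₂_le fun k hk => le_iSup₂_of_le k (by omega) le_rfl
  have := (hg.indep j).eq_bot
  refine le_antisymm ?_ bot_le
  intro x ⟨hx1, hx2⟩
  rw [← this]
  exact ⟨hx1, h1 hx2⟩

lemma Ag_ne_bot (hg : M.IsNaturalGrading t Ag) (ht : 1 ≤ t)
    (hne : M.lcs t ≠ ⊥) (hbot : M.lcs (t + 1) = ⊥) :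
    ∀ j, 1 ≤ j → j ≤ t → Ag j ≠ ⊥ := by
  intro j h1 h2 hAg
  rcases eq_or_lt_of_le h2 with h | h
  · subst h
    exact hne (by rw [hg.lcs_top_eq ht]; exact hAg)
  · have heq : M.lcs j = M.lcs (j + 1) := by
      rw [hg.lcs_sup h1 h, hAg, bot_sup_eq]
    have h3 := lcs_stab M j h1 heq t (by omega)
    have h4 := lcs_stab M j h1 heq (t+1) (by omega)
    exact hne (by rw [h3, ← h4, hbot])

lemma finrank_lcs_sum [FiniteDimensional ℂ A] (hg : M.IsNaturalGrading t Ag) (ht : 1 ≤ t) :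
    ∀ i j, j = t - i → 1 ≤ j →
      Module.finrank ℂ (M.lcs j) = ∑ k ∈ Finset.Icc j t, Module.finrank ℂ (Ag k) := by
  intro i
  induction i with
  | zero =>
    intro j hj h1
    have : j = t := by omega
    subst this
    rw [hg.lcs_top_eq ht, Finset.Icc_self, Finset.sum_singleton]
  | succ i ih =>
    intro j hj h1
    by_cases hit : t ≤ i + 1
    · omega
    push_neg at hit
    have hjt : j < t := by omega
    have hsup := hg.lcs_sup h1 hjt
    have hdisj := hg.lcs_disj h1 hjt
    have hrank := Submodule.finrank_sup_add_finrank_inf_eq (Ag j) (M.lcs (j+1))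
    rw [hdisj, finrank_bot, add_zero, ← hsup] at hrank
    have hih := ih (j+1) (by omega) (by omega)
    have hicc : Finset.Icc j t = insert j (Finset.Icc (j+1) t) := by
      ext x
      simp only [Finset.mem_Icc, Finset.mem_insert]
      omega
    rw [hrank, hih, hicc, Finset.sum_insert (by simp)]

end IsNaturalGrading

/-! ### coefficient extraction -/

open scoped Classical in
noncomputable def coeffOf (v w : A) : ℂ :=
  if h : ∃ c : ℂ, v = c • w then h.choose else 0

lemma coeffOf_spec {v w : A} (h : ∃ c : ℂ, v = c • w) : v = coeffOf v w • w := by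
  unfold coeffOf
  rw [dif_pos h]
  exact h.choose_spec

lemma mul_right_comm' (M : ZinbielStr A) (a b c : A) :
    M.mul (M.mul a b) c = M.mul (M.mul a c) b := by
  rw [M.zinbiel, M.zinbiel, add_comm]


/-- A naturally graded quasi-filiform complex Zinbiel algebra of type `A_(r)`
(`r = 1` with `dim A_1 = 3`, or `r ≥ 2` with `dim A_1 = 2 = dim A_r`) has `r ≤ 3`. -/
theorem type_le_three {A : Type*} [AddCommGroup A] [Module ℂ A]
    [FiniteDimensional ℂ A] (M : ZinbielStr A) (n r : ℕ)
    (Ag : ℕ → Submodule ℂ A)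
    (hqf : M.IsQuasiFiliform n) (hg : M.IsNaturalGrading (n - 2) Ag)
    (htype : (r = 1 ∧ Module.finrank ℂ (Ag 1) = 3) ∨
      (2 ≤ r ∧ Module.finrank ℂ (Ag 1) = 2 ∧ Module.finrank ℂ (Ag r) = 2)) :
    r ≤ 3 := by
  rcases htype with ⟨hr1, -⟩ | ⟨hr2, h1dim, hrdim⟩
  · omega
  by_contra hr3
  push_neg at hr3
  obtain ⟨hfin, hlcsne, hlcsbot⟩ := hqf
  set t := n - 2 with htdef
  have hAgr_ne : Ag r ≠ ⊥ := by
    intro h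
    rw [h] at hrdim
    simp [finrank_bot] at hrdim
  have hrt : r ≤ t := by
    by_contra h
    exact hAgr_ne (hg.high_deg r (by omega))
  have ht1 : 1 ≤ t := by omega
  have hn : n = t + 2 := by omega
  have hlcst1 : M.lcs (t + 1) = ⊥ := by
    rw [show t + 1 = n - 1 by omega]; exact hlcsbot
  have hlcstne : M.lcs t ≠ ⊥ := hlcsne
  have hAgne := hg.Ag_ne_bot ht1 hlcstne hlcst1
  have hdpos : ∀ j, 1 ≤ j → j ≤ t → 1 ≤ Module.finrank ℂ (Ag j) := by
    intro j h1 h2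
    rcases Nat.eq_zero_or_pos (Module.finrank ℂ (Ag j)) with h | h
    · exact absurd (Submodule.finrank_eq_zero.1 h) (hAgne j h1 h2)
    · exact h
  have hsum : ∑ k ∈ Finset.Icc 1 t, Module.finrank ℂ (Ag k) = n := by
    have hs := hg.finrank_lcs_sum ht1 (t - 1) 1 (by omega) le_rfl
    have hl1 : M.lcs 1 = ⊤ := rfl
    rw [hl1, finrank_top ℂ A] at hs
    rw [← hs]
    exact hfin
  have hone : ∀ j, 2 ≤ j → j ≤ t → j ≠ r → Module.finrank ℂ (Ag j) = 1 := by
    intro j h2 hjt hjr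
    by_contra hne1
    have hj2 : 2 ≤ Module.finrank ℂ (Ag j) := by
      have := hdpos j (by omega) hjt; omega
    have h1mem : (1 : ℕ) ∈ Finset.Icc 1 t := by
      simp only [Finset.mem_Icc]; omega
    have hrmem : r ∈ (Finset.Icc 1 t).erase 1 := by
      simp only [Finset.mem_erase, Finset.mem_Icc]; omega
    have hjmem : j ∈ ((Finset.Icc 1 t).erase 1).erase r := by
      simp only [Finset.mem_erase, Finset.mem_Icc]; omega
    have e1 := Finset.add_sum_erase _ (fun k => Module.finrank ℂ (Ag k)) h1mem
    have e2 := Finset.add_sum_erase _ (fun k => Module.finrank ℂ (Ag k)) hrmem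
    have e3 := Finset.add_sum_erase _ (fun k => Module.finrank ℂ (Ag k)) hjmem
    have hbound : (((((Finset.Icc 1 t).erase 1).erase r).erase j).card : ℕ)
        ≤ ∑ k ∈ ((((Finset.Icc 1 t).erase 1).erase r).erase j),
            Module.finrank ℂ (Ag k) := by
      have := Finset.card_nsmul_le_sum ((((Finset.Icc 1 t).erase 1).erase r).erase j)
        (fun k => Module.finrank ℂ (Ag k)) 1 ?_
      · simpa using this
      · intro k hk
        simp only [Finset.mem_erase, Finset.mem_Icc] at hk
        exact hdpos k hk.2.2.2.1 hk.2.2.2.2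
    have hcard : (((((Finset.Icc 1 t).erase 1).erase r).erase j).card : ℕ) = t - 3 := by
      rw [Finset.card_erase_of_mem hjmem, Finset.card_erase_of_mem hrmem,
        Finset.card_erase_of_mem h1mem, Nat.card_Icc]
      omega
    rw [hcard] at hbound
    omega
  -- basis vectors of the 1-dimensional pieces
  have hgex : ∀ k, ∃ gk : A, 2 ≤ k → k ≤ r - 1 →
      gk ∈ Ag k ∧ gk ≠ 0 ∧ ∀ u ∈ Ag k, ∃ c : ℂ, u = c • gk := by
    intro k
    by_cases hk : 2 ≤ k ∧ k ≤ r - 1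
    · obtain ⟨hk2, hkr⟩ := hk
      have hdim1 : Module.finrank ℂ (Ag k) = 1 := hone k hk2 (by omega) (by omega)
      rw [finrank_eq_one_iff'] at hdim1
      obtain ⟨⟨v, hv⟩, hvne, hvs⟩ := hdim1
      refine ⟨v, fun _ _ => ⟨hv, ?_, ?_⟩⟩
      · intro h0
        exact hvne (Subtype.ext h0)
      · intro u hu
        obtain ⟨c, hc⟩ := hvs ⟨u, hu⟩
        refine ⟨c, ?_⟩
        have := congrArg Subtype.val hc
        simpa using this.symm
    · exact ⟨0, fun h2 hr1 => absurd ⟨h2, hr1⟩ hk⟩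
  choose gv hgv using hgex
  have hgne : ∀ k, 2 ≤ k → k ≤ r - 1 → gv k ≠ 0 := fun k h2 hk => (hgv k h2 hk).2.1
  -- scalar functions
  let φ : ℕ → ↥(Ag 1) → ℂ := fun k x => coeffOf (M.mul ↑x (gv k)) (gv (k + 1))
  let ψ : ℕ → ↥(Ag 1) → ℂ := fun k x => coeffOf (M.mul (gv k) ↑x) (gv (k + 1))
  let μf : ↥(Ag 1) → ↥(Ag 1) → ℂ := fun x y => coeffOf (M.mul ↑x ↑y) (gv 2)
  have hφ : ∀ k, 2 ≤ k → k ≤ r - 2 → ∀ x : ↥(Ag 1),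
      M.mul ↑x (gv k) = φ k x • gv (k + 1) := by
    intro k h2 hk x
    apply coeffOf_spec
    have hmem : M.mul ↑x (gv k) ∈ Ag (k + 1) := by
      have := hg.mul_mem 1 k ↑x (gv k) x.2 ((hgv k h2 (by omega)).1)
      rwa [show 1 + k = k + 1 by ring] at this
    exact (hgv (k + 1) (by omega) (by omega)).2.2 _ hmem
  have hψ : ∀ k, 2 ≤ k → k ≤ r - 2 → ∀ x : ↥(Ag 1),
      M.mul (gv k) ↑x = ψ k x • gv (k + 1) := by
    intro k h2 hk x
    apply coeffOf_spec
    have hmem : M.mul (gv k) ↑x ∈ Ag (k + 1) := by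
      exact hg.mul_mem k 1 (gv k) ↑x ((hgv k h2 (by omega)).1) x.2
    exact (hgv (k + 1) (by omega) (by omega)).2.2 _ hmem
  have hμ : ∀ x y : ↥(Ag 1), M.mul ↑x ↑y = μf x y • gv 2 := by
    intro x y
    apply coeffOf_spec
    have hmem : M.mul (x : A) ↑y ∈ Ag 2 := hg.mul_mem 1 1 ↑x ↑y x.2 y.2
    exact (hgv 2 (by omega) (by omega)).2.2 _ hmem
  -- nonvanishing
  have hφne : ∀ k, 2 ≤ k → k ≤ r - 2 → ∃ x : ↥(Ag 1), φ k x ≠ 0 := by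
    intro k h2 hk
    by_contra hall
    push_neg at hall
    have hspan : Ag (k + 1) ≤ Submodule.span ℂ
        {z | ∃ x y, x ∈ Ag 1 ∧ y ∈ Ag k ∧ z = M.mul x y} := by
      have := hg.graded_span ht1 (m := k + 1) (by omega) (by omega)
      simpa using this
    have hzero : Ag (k + 1) ≤ ⊥ := by
      refine le_trans hspan ?_
      rw [Submodule.span_le]
      rintro z ⟨x, y, hx, hy, rfl⟩
      obtain ⟨c, hc⟩ := (hgv k h2 (by omega)).2.2 y hy
      have h0 : M.mul x (gv k) = 0 := by
        have := hφ k h2 hk ⟨x, hx⟩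
        rw [hall ⟨x, hx⟩, zero_smul] at this
        exact this
      rw [hc, map_smul]
      simp [Submodule.mem_bot, h0]
    exact hAgne (k + 1) (by omega) (by omega) (le_bot_iff.1 hzero)
  have hμne : ∃ x y : ↥(Ag 1), μf x y ≠ 0 := by
    by_contra hall
    push_neg at hall
    have hspan : Ag 2 ≤ Submodule.span ℂ
        {z | ∃ x y, x ∈ Ag 1 ∧ y ∈ Ag 1 ∧ z = M.mul x y} := by
      have := hg.graded_span ht1 (m := 2) le_rfl (by omega)
      simpa using this
    have hzero : Ag 2 ≤ ⊥ := by
      refine le_trans hspan ?_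
      rw [Submodule.span_le]
      rintro z ⟨x, y, hx, hy, rfl⟩
      have := hμ ⟨x, hx⟩ ⟨y, hy⟩
      rw [hall ⟨x, hx⟩ ⟨y, hy⟩, zero_smul] at this
      simp [Submodule.mem_bot, this]
    exact hAgne 2 (by omega) (by omega) (le_bot_iff.1 hzero)
  have hcancel : ∀ (a b : ℂ) (v : A), v ≠ 0 → a • v = b • v → a = b := by
    intro a b v hv h
    exact smul_left_injective ℂ hv h
  -- base identity
  have hbase_id : ∀ x y z : ↥(Ag 1), μf x y * ψ 2 z = (μf y z + μf z y) * φ 2 x := by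
    intro x y z
    have hzin := M.zinbiel ↑x ↑y ↑z
    rw [hμ x y, hμ y z, hμ z y, map_smul, LinearMap.smul_apply, map_smul, map_smul,
      hψ 2 le_rfl (by omega) z, hφ 2 le_rfl (by omega) x] at hzin
    rw [smul_smul, smul_smul, smul_smul, ← add_smul] at hzin
    apply hcancel _ _ (gv (2 + 1)) (hgne (2 + 1) (by omega) (by omega))
    rw [hzin]
    congr 1
    ring
  -- step identity
  have hstep_id : ∀ k, 2 ≤ k → k + 1 ≤ r - 2 → ∀ x y : ↥(Ag 1),
      φ k y * ψ (k + 1) x = (φ k x + ψ k x) * φ (k + 1) y := by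
    intro k h2 hk x y
    have hz := M.zinbiel ↑y ↑x (gv k)
    rw [hφ k h2 (by omega) x, hψ k h2 (by omega) x, map_smul, map_smul,
      hφ (k + 1) (by omega) hk y] at hz
    have hrc := mul_right_comm' M ↑y (gv k) ↑x
    rw [hφ k h2 (by omega) y, map_smul, LinearMap.smul_apply,
      hψ (k + 1) (by omega) hk x, hz] at hrc
    rw [smul_smul, smul_smul, smul_smul, ← add_smul] at hrc
    apply hcancel _ _ (gv (k + 1 + 1)) (hgne (k + 1 + 1) (by omega) (by omega))
    rw [hrc]
    congr 1
    ring
  have h_rm2 : 2 ≤ r - 2 := by omega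
  -- top identity
  have htop_id : ∀ x y : ↥(Ag 1),
      (φ (r - 2) x + ψ (r - 2) x) • (M.mul ↑y (gv (r - 2 + 1)))
        = φ (r - 2) y • (M.mul (gv (r - 2 + 1)) ↑x) := by
    intro x y
    have hz := M.zinbiel ↑y ↑x (gv (r - 2))
    rw [hφ (r - 2) h_rm2 le_rfl x, hψ (r - 2) h_rm2 le_rfl x, map_smul, map_smul] at hz
    have hrc := mul_right_comm' M ↑y (gv (r - 2)) ↑x
    rw [hφ (r - 2) h_rm2 le_rfl y, map_smul, LinearMap.smul_apply, hz] at hrc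
    rw [← add_smul] at hrc
    exact hrc.symm
  -- scalar chase
  have hbase' : ∃ c : ℕ, ∀ x, ψ 2 x = (c : ℂ) * φ 2 x := by
    rcases aux_base (φ 2) (ψ 2) μf hbase_id hμne (hφne 2 le_rfl h_rm2) with h | h
    · exact ⟨0, fun x => by rw [h x]; simp⟩
    · exact ⟨2, fun x => by rw [h x]; norm_num⟩
  obtain ⟨cψ, hcψ⟩ := aux_chase φ ψ (r - 2) h_rm2 hbase' hstep_id hφne
  obtain ⟨x1, hx1⟩ := hφne (r - 2) h_rm2 le_rfl
  have hcone : ((1 : ℂ) + (cψ : ℂ)) * φ (r - 2) x1 ≠ 0 := by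
    refine mul_ne_zero ?_ hx1
    have : ((1 + cψ : ℕ) : ℂ) ≠ 0 := Nat.cast_ne_zero.2 (by omega)
    push_cast at this
    exact this
  set v := M.mul (gv (r - 2 + 1)) ↑x1 with hvdef
  have hyv : ∀ y : ↥(Ag 1), M.mul ↑y (gv (r - 2 + 1)) ∈ Submodule.span ℂ {v} := by
    intro y
    have h := htop_id x1 y
    rw [hcψ x1] at h
    have h2 : (((1 : ℂ) + (cψ : ℂ)) * φ (r - 2) x1) • M.mul ↑y (gv (r - 2 + 1))
        = φ (r - 2) y • v := by
      rw [← h]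
      congr 1
      ring
    have h4 := congrArg (fun w => (((1 : ℂ) + (cψ : ℂ)) * φ (r - 2) x1)⁻¹ • w) h2
    simp only [smul_smul] at h4
    rw [inv_mul_cancel₀ hcone, one_smul] at h4
    rw [h4]
    exact Submodule.smul_mem _ _ (Submodule.mem_span_singleton_self v)
  have hAgr_le : Ag r ≤ Submodule.span ℂ {v} := by
    refine le_trans (hg.graded_span ht1 (m := r) (by omega) hrt) ?_
    rw [Submodule.span_le]
    rintro z ⟨x, y, hx, hy, rfl⟩
    rw [show r - 1 = r - 2 + 1 by omega] at hy
    obtain ⟨c, hc⟩ := (hgv (r - 2 + 1) (by omega) (by omega)).2.2 y hy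
    rw [hc, map_smul]
    exact Submodule.smul_mem _ _ (hyv ⟨x, hx⟩)
  have hfr : Module.finrank ℂ (Ag r) ≤ 1 := by
    by_cases hv0 : v = 0
    · rw [hv0] at hAgr_le
      have hb : Submodule.span ℂ ({0} : Set A) = ⊥ := by
        simpa using Submodule.span_zero_singleton (R := ℂ) (M := A)
      rw [hb, le_bot_iff] at hAgr_le
      rw [hAgr_le]
      simp
    · have h1 : Module.finrank ℂ (Submodule.span ℂ ({v} : Set A)) = 1 := by
        simpa using finrank_span_singleton hv0
      calc Module.finrank ℂ (Ag r) ≤ Module.finrank ℂ (Submodule.span ℂ ({v} : Set A)) :=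
            Submodule.finrank_mono hAgr_le
        _ = 1 := h1
  rw [hrdim] at hfr
  omega


end ZinbielStr
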